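/- Let u_n(z) = z^n (d^n/dz^n) ₁F₁(α; γ; -εz). Then the three-term recurrence εz(α+n-1) u_{n-1}(z) + (γ + n - 1 + εz) u_n(z) + u_{n+1}(z) = 0 holds for all n ≥ 1, as an identity of formal power series. -/

import Mathlib

open PowerSeries

/-- The Pochhammer symbol `(a)_k = a(a+1)⋯(a+k-1)`. -/
noncomputable def poch (a : ℂ) (k : ℕ) : ℂ := (ascPochhammer ℂ k).eval a

/-- The Kummer series `₁F₁(α; γ; -εz)` as a formal power series in `z`. -/
noncomputable def kummerNeg (α γ ε : ℂ) : PowerSeries ℂ :=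
  PowerSeries.mk fun k => poch α k * (-ε) ^ k / (poch γ k * (k.factorial : ℂ))

/-- `u_n(z) = z^n (dⁿ/dzⁿ) ₁F₁(α; γ; -εz)` as a formal power series. -/
noncomputable def kummerU (α γ ε : ℂ) (n : ℕ) : PowerSeries ℂ :=
  X ^ n * (fun f => derivative ℂ f)^[n] (kummerNeg α γ ε)

lemma poch_succ (a : ℂ) (k : ℕ) : poch a (k+1) = poch a k * (a + k) := by
  simp [poch, ascPochhammer_succ_eval]

lemma poch_ne_zero {γ : ℂ} (hγ : ∀ m : ℕ, γ ≠ -(m : ℂ)) (k : ℕ) : poch γ k ≠ 0 := by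
  induction k with
  | zero => simp [poch]
  | succ k ih =>
      rw [poch_succ]
      refine mul_ne_zero ih ?_
      intro h
      exact hγ k (by linear_combination h)

lemma kummer_key (α γ ε : ℂ) (hγ : ∀ m : ℕ, γ ≠ -(m : ℂ)) (k : ℕ) :
    (γ + k) * (k+1) * (poch α (k+1) * (-ε) ^ (k+1) / (poch γ (k+1) * ((k+1).factorial : ℂ)))
      = -ε * (α + k) * (poch α k * (-ε) ^ k / (poch γ k * (k.factorial : ℂ))) := by
  have h1 : poch γ k ≠ 0 := poch_ne_zero hγ k
  have h2 : (γ + k) ≠ 0 := fun h => hγ k (by linear_combination h)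
  have h3 : ((k.factorial : ℂ)) ≠ 0 := Nat.cast_ne_zero.2 k.factorial_ne_zero
  have h4 : ((k:ℂ) + 1) ≠ 0 := by exact_mod_cast Nat.succ_ne_zero k
  rw [poch_succ, poch_succ, Nat.factorial_succ]
  push_cast
  field_simp
  ring

lemma coeff_iter_deriv (f : PowerSeries ℂ) (n k : ℕ) :
    coeff k ((fun f => derivative ℂ f)^[n] f)
      = ((k+n).descFactorial n : ℂ) * coeff (k+n) f := by
  induction n generalizing f with
  | zero => simp
  | succ n ih =>
      rw [Function.iterate_succ_apply, ih, coeff_derivative]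
      rw [show k + (n+1) = (k+n) + 1 by ring, Nat.succ_descFactorial_succ]
      push_cast
      ring

/-- For all `n ≥ 1`, the three-term recurrence
`εz(α+n-1) u_{n-1} + (γ + n - 1 + εz) u_n + u_{n+1} = 0` holds as an identity of
formal power series. -/
theorem kummerU_three_term_recurrence (α γ ε : ℂ) (hγ : ∀ m : ℕ, γ ≠ -(m : ℂ))
    (hε : ε ≠ 0) (n : ℕ) (hn : 1 ≤ n) :
    C ε * X * C (α + n - 1) * kummerU α γ ε (n - 1)
      + (C (γ + n - 1) + C ε * X) * kummerU α γ ε n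
      + kummerU α γ ε (n + 1) = 0 := by
  obtain ⟨j, rfl⟩ : ∃ j, n = j + 1 := ⟨n - 1, (Nat.succ_pred_eq_of_pos hn).symm⟩
  set F := kummerNeg α γ ε with hF
  set D : PowerSeries ℂ → PowerSeries ℂ := fun f => derivative ℂ f with hD
  have hre : C ε * X * C (α + ((j:ℂ)+1) - 1) * kummerU α γ ε j
      + (C (γ + ((j:ℂ)+1) - 1) + C ε * X) * kummerU α γ ε (j+1)
      + kummerU α γ ε (j + 1 + 1)
      = X ^ (j+1) * (C (ε * (α + ((j:ℂ)+1) - 1)) * D^[j] F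
          + C (γ + ((j:ℂ)+1) - 1) * D^[j+1] F)
        + X ^ (j+2) * (C ε * D^[j+1] F + D^[j+2] F) := by
    simp only [kummerU, map_mul, ← hF, ← hD]
    ring
  push_cast
  rw [hre]
  ext m
  simp only [map_add, coeff_X_pow_mul', map_zero]
  rcases lt_or_ge m (j+1) with hm | hm
  · rw [if_neg (by omega), if_neg (by omega)]
    simp
  obtain ⟨d, rfl⟩ : ∃ d, m = (j+1) + d := ⟨m - (j+1), by omega⟩
  rw [if_pos (by omega)]
  have hsub1 : j + 1 + d - (j+1) = d := by omega
  rw [hsub1]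
  rcases d with _ | e
  · -- d = 0
    rw [if_neg (by omega)]
    simp only [hD, map_add, coeff_C_mul, coeff_iter_deriv, hF, kummerNeg, coeff_mk,
      Nat.zero_add, Nat.add_zero, zero_add, add_zero]
    rw [Nat.descFactorial_self, Nat.descFactorial_self]
    have hkey := kummer_key α γ ε hγ j
    push_cast [Nat.factorial_succ] at hkey ⊢
    linear_combination (j.factorial : ℂ) * hkey
  · -- d = e + 1
    rw [if_pos (by omega)]
    have hsub2 : j + 1 + (e+1) - (j+2) = e := by omega
    rw [hsub2]
    simp only [hD, map_add, coeff_C_mul, coeff_iter_deriv, hF, kummerNeg, coeff_mk]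
    have hi1 : e + 1 + j = (j + e) + 1 := by omega
    have hi2 : e + 1 + (j+1) = (j + e) + 2 := by omega
    have hi3 : e + (j+1) = (j + e) + 1 := by omega
    have hi4 : e + (j+2) = (j + e) + 2 := by omega
    rw [hi1, hi2, hi3, hi4]
    set P : ℕ := ((j+e)+1).descFactorial j with hP
    have hd2 : ((j+e)+2).descFactorial (j+1) = ((j+e)+2) * P := by
      rw [Nat.succ_descFactorial_succ]
    have hd3 : ((j+e)+1).descFactorial (j+1) = (e+1) * P := by
      rw [Nat.descFactorial_succ, hP]
      congr 1
      omega
    have hd4 : ((j+e)+2).descFactorial (j+2) = ((j+e)+2) * ((e+1) * P) := by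
      rw [show j + 2 = (j+1) + 1 from rfl, Nat.succ_descFactorial_succ, hd3]
    rw [hd2, hd3, hd4]
    have hkey := kummer_key α γ ε hγ (j+e+1)
    push_cast at hkey ⊢
    linear_combination (P : ℂ) * hkey
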